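/- Let A be a finite-dimensional unital associative algebra over a field k, and let Δ(1) = Σᵢ aᵢ ⊗ bᵢ be an element of A ⊗ A satisfying the Casimir condition Σᵢ aᵢ ⊗ bᵢx = Σᵢ xaᵢ ⊗ bᵢ for all x ∈ A. Define Δ : A → A ⊗ A by Δ(x) = Σᵢ aᵢ ⊗ bᵢx. Then Δ is coassociative: (Δ ⊗ id)∘Δ = (id ⊗ Δ)∘Δ. -/
import Mathlib


open TensorProduct

/-- Let `A` be a finite-dimensional unital associative algebra over a field `k`,
and let `Δ(1) = ∑ i, a i ⊗ b i` be an element of `A ⊗ A` satisfying the Casimir condition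
`∑ i, a i ⊗ (b i * x) = ∑ i, (x * a i) ⊗ b i` for all `x`.  Define `Δ x = ∑ i, a i ⊗ (b i * x)`.
Then `Δ` is coassociative: `(Δ ⊗ id) ∘ Δ = (id ⊗ Δ) ∘ Δ` (stated elementwise in `(A ⊗ A) ⊗ A`). -/
theorem noncounital_comul_coassoc
    (k : Type*) [Field k] (A : Type*) [Ring A] [Algebra k A] [FiniteDimensional k A]
    (ι : Type*) [Fintype ι] (a b : ι → A)
    (casimir : ∀ x : A,
      (∑ i, a i ⊗ₜ[k] (b i * x)) = ∑ i, (x * a i) ⊗ₜ[k] b i) :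
    ∀ x : A,
      (∑ i, ∑ j, (a j ⊗ₜ[k] (b j * a i)) ⊗ₜ[k] (b i * x))
        = ∑ i, ∑ j, (a i ⊗ₜ[k] a j) ⊗ₜ[k] (b j * (b i * x)) := by
  intro x
  -- D u = ∑ j, a j ⊗ (b j * u)
  set D : A →ₗ[k] A ⊗[k] A :=
    ∑ j, (TensorProduct.mk k A A (a j)).comp (LinearMap.mulLeft k (b j)) with hD
  have hDapp : ∀ u : A, D u = ∑ j, a j ⊗ₜ[k] (b j * u) := by
    intro u; simp [hD, LinearMap.sum_apply]
  have hcas : ∀ u : A, D u = ∑ j, (u * a j) ⊗ₜ[k] b j :=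
    fun u => (hDapp u).trans (casimir u)
  -- LHS = (D ⊗ id) applied to ∑ i, a i ⊗ (b i * x)
  have hL : (∑ i, ∑ j, (a j ⊗ₜ[k] (b j * a i)) ⊗ₜ[k] (b i * x))
      = (D.rTensor A) (∑ i, a i ⊗ₜ[k] (b i * x)) := by
    rw [map_sum]
    refine Finset.sum_congr rfl fun i _ => ?_
    rw [LinearMap.rTensor_tmul, hDapp, TensorProduct.sum_tmul]
  have hT : (∑ i, ∑ j, (a j ⊗ₜ[k] (b j * a i)) ⊗ₜ[k] (b i * x))
      = ∑ i, ∑ j, (a j ⊗ₜ[k] (b j * (x * a i))) ⊗ₜ[k] b i := by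
    rw [hL, casimir x, map_sum]
    refine Finset.sum_congr rfl fun i _ => ?_
    rw [LinearMap.rTensor_tmul, hDapp, TensorProduct.sum_tmul]
  -- H (u ⊗ v) = ∑ j, (u ⊗ a j) ⊗ (b j * v)
  set H : A ⊗[k] A →ₗ[k] (A ⊗[k] A) ⊗[k] A :=
    ∑ j, TensorProduct.map ((TensorProduct.mk k A A).flip (a j)) (LinearMap.mulLeft k (b j))
    with hH
  have hHapp : ∀ u v : A, H (u ⊗ₜ[k] v) = ∑ j, (u ⊗ₜ[k] a j) ⊗ₜ[k] (b j * v) := by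
    intro u v; simp [hH, LinearMap.sum_apply]
  have hR : (∑ i, ∑ j, (a i ⊗ₜ[k] a j) ⊗ₜ[k] (b j * (b i * x)))
      = H (∑ i, a i ⊗ₜ[k] (b i * x)) := by
    rw [map_sum]
    exact Finset.sum_congr rfl fun i _ => (hHapp _ _).symm
  rw [hT, hR, casimir x, map_sum]
  -- now RHS = ∑ i, ∑ j, ((x * a i) ⊗ a j) ⊗ (b j * b i)
  have step1 : ∀ i : ι, H ((x * a i) ⊗ₜ[k] (b i))
      = ∑ j, ((x * a i) ⊗ₜ[k] (b i * a j)) ⊗ₜ[k] b j := by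
    intro i
    rw [hHapp]
    have := congrArg ((TensorProduct.mk k A A (x * a i)).rTensor A) (hcas (b i))
    rw [hDapp] at this
    simpa [map_sum] using this
  have step2 : ∀ i : ι, (∑ j, ((x * a j) ⊗ₜ[k] (b j * a i)) ⊗ₜ[k] b i)
      = ∑ j, (a j ⊗ₜ[k] (b j * (x * a i))) ⊗ₜ[k] b i := by
    intro i
    have h0 : (∑ j, a j ⊗ₜ[k] ((b j * x) * a i)) = ∑ j, (x * a j) ⊗ₜ[k] (b j * a i) := by
      have := congrArg (LinearMap.lTensor A (LinearMap.mulRight k (a i))) (casimir x)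
      simpa [map_sum] using this
    have h1 : (∑ j, (x * a j) ⊗ₜ[k] (b j * a i)) = ∑ j, a j ⊗ₜ[k] (b j * (x * a i)) := by
      rw [← h0]
      exact Finset.sum_congr rfl fun j _ => by rw [mul_assoc]
    calc (∑ j, ((x * a j) ⊗ₜ[k] (b j * a i)) ⊗ₜ[k] b i)
        = (∑ j, (x * a j) ⊗ₜ[k] (b j * a i)) ⊗ₜ[k] b i := by
          rw [TensorProduct.sum_tmul]
      _ = (∑ j, a j ⊗ₜ[k] (b j * (x * a i))) ⊗ₜ[k] b i := by rw [h1]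
      _ = ∑ j, (a j ⊗ₜ[k] (b j * (x * a i))) ⊗ₜ[k] b i := by
          rw [TensorProduct.sum_tmul]
  calc (∑ i, ∑ j, (a j ⊗ₜ[k] (b j * (x * a i))) ⊗ₜ[k] b i)
      = ∑ i, ∑ j, ((x * a j) ⊗ₜ[k] (b j * a i)) ⊗ₜ[k] b i := by
        exact Finset.sum_congr rfl fun i _ => (step2 i).symm
    _ = ∑ j, ∑ i, ((x * a j) ⊗ₜ[k] (b j * a i)) ⊗ₜ[k] b i := Finset.sum_comm
    _ = ∑ i, H ((x * a i) ⊗ₜ[k] b i) := by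
        exact Finset.sum_congr rfl fun j _ => (step1 j).symm
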